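/- Let G be a finite DAG with vertices partitioned into disjoint sets X, Y, Z. Define the cut graph H: delete all vertices in Z, and connect two remaining vertices u, w by an undirected edge whenever some vertex v of G (possibly in Z) has both u and w among {v} ∪ Pa(v). Then X and Y are d-separated by Z in G (classical d-separation) if and only if, after restricting G to An(X ∪ Y ∪ Z) and forming the cut graph, no vertex of X is connected to a vertex of Y. -/

import Mathlib

open Classical

/-- Ancestors of a set `W` of vertices: all `u` with a directed path (possibly of
length 0) from `u` to some element of `W`. -/
def An {V : Type} (E : V → V → Prop) (W : Set V) : Set V :=
  {u | ∃ w ∈ W, Relation.ReflTransGen E u w}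

/-- Parents of a vertex `v`. -/
def Pa {V : Type} (E : V → V → Prop) (v : V) : Set V := {u | E u v}

/-- Acyclicity of a directed graph. -/
def IsAcyclicDigraph {V : Type} (E : V → V → Prop) : Prop :=
  ∀ v, ¬ Relation.TransGen E v v

/-- Marginal of a joint distribution `P` on `∏ v, X v` onto the coordinates in `S`,
evaluated at (the `S`-coordinates of) `x`. -/
noncomputable def marg {V : Type} [Fintype V] [DecidableEq V] {X : V → Type}
    [∀ v, Fintype (X v)] (P : (∀ v, X v) → ℝ) (S : Set V) (x : ∀ v, X v) : ℝ :=
  ∑ y : ∀ v, X v, if ∀ v ∈ S, y v = x v then P y else 0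

/-- Conditional independence `A ⊥ B | S` for a finite joint distribution `P`:
`P(a,b,s)·P(s) = P(a,s)·P(b,s)` for all values (phrased via marginals). -/
def CondIndep {V : Type} [Fintype V] [DecidableEq V] {X : V → Type}
    [∀ v, Fintype (X v)] (P : (∀ v, X v) → ℝ) (A B S : Set V) : Prop :=
  ∀ x : ∀ v, X v,
    marg P (A ∪ B ∪ S) x * marg P S x = marg P (A ∪ S) x * marg P (B ∪ S) x

/-- `P` factorizes according to the directed graph `E`: `P(x) = ∏ v K v (x)` for
stochastic kernels `K v` depending only on the coordinate `v` and its parents. -/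
def Factorizes {V : Type} [Fintype V] [DecidableEq V] {X : V → Type}
    [∀ v, Fintype (X v)] (E : V → V → Prop) (P : (∀ v, X v) → ℝ) : Prop :=
  ∃ K : (v : V) → (∀ u, X u) → ℝ,
    (∀ v x, 0 ≤ K v x) ∧
    (∀ v x, ∑ a : X v, K v (Function.update x v a) = 1) ∧
    (∀ v x x', x v = x' v → (∀ u, E u v → x u = x' u) → K v x = K v x') ∧
    (∀ x, P x = ∏ v, K v x)

/-- An undirected walk in the directed graph `E`. -/
def IsUWalk {V : Type} (E : V → V → Prop) (p : List V) : Prop :=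
  p.Chain' fun a b => E a b ∨ E b a

/-- An undirected path `p` is blocked by `Z` (Pearl): it contains a chain or fork
whose middle vertex is in `Z`, or a collider whose middle vertex is not an ancestor
of `Z`. -/
def Blocked {V : Type} (E : V → V → Prop) (Z : Set V) (p : List V) : Prop :=
  ∃ (i : ℕ) (a m b : V), p[i]? = some a ∧ p[i+1]? = some m ∧ p[i+2]? = some b ∧
    ((((E a m ∧ E m b) ∨ (E m a ∧ E b m) ∨ (E m a ∧ E m b)) ∧ m ∈ Z) ∨
      ((E a m ∧ E b m) ∧ m ∉ An E Z))

/-- Classical d-separation: every undirected path between `X` and `Y` is blocked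
by `Z`. -/
def DSep {V : Type} (E : V → V → Prop) (X Y Z : Set V) : Prop :=
  ∀ p : List V, IsUWalk E p → p.Nodup →
    (∃ x ∈ X, p.head? = some x) → (∃ y ∈ Y, p.getLast? = some y) → Blocked E Z p

namespace DSepAux

variable {V : Type}

/-- Triple condition for an active walk. -/
def okT (E : V → V → Prop) (Z : Set V) (a m b : V) : Prop :=
  ((E a m ∧ E b m) ∧ m ∈ An E Z) ∨ (¬(E a m ∧ E b m) ∧ m ∉ Z)

lemma okT_symm {E : V → V → Prop} {Z : Set V} {a m b : V} (h : okT E Z a m b) :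
    okT E Z b m a := by
  rcases h with ⟨⟨h1, h2⟩, h3⟩ | ⟨h1, h2⟩
  · exact Or.inl ⟨⟨h2, h1⟩, h3⟩
  · exact Or.inr ⟨fun ⟨u, v⟩ => h1 ⟨v, u⟩, h2⟩

/-- Inductive characterization of active (undirected, unblocked) walks. -/
inductive AW (E : V → V → Prop) (Z : Set V) : List V → Prop
  | nil : AW E Z []
  | single (a : V) : AW E Z [a]
  | pair (a b : V) : (E a b ∨ E b a) → AW E Z [a, b]
  | cons (a m b : V) (l : List V) : (E a m ∨ E m a) → okT E Z a m b →
      AW E Z (m :: b :: l) → AW E Z (a :: m :: b :: l)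

variable {E : V → V → Prop} {Z : Set V}

lemma AW.dest {a m : V} {l : List V} (h : AW E Z (a :: m :: l)) :
    (E a m ∨ E m a) ∧ AW E Z (m :: l) ∧ ∀ b l', l = b :: l' → okT E Z a m b := by
  cases h with
  | pair _ _ e => exact ⟨e, .single m, by rintro b l' ⟨⟩⟩
  | cons _ _ b l e ho h => exact ⟨e, h, by rintro b' l' heq; cases heq; exact ho⟩

lemma AW.tail {a : V} {l : List V} (h : AW E Z (a :: l)) : AW E Z l := by
  cases h with
  | single => exact .nil
  | pair _ b _ => exact .single b
  | cons _ m b l _ _ h => exact h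

lemma AW.isUWalk {p : List V} (h : AW E Z p) : IsUWalk E p := by
  induction h with
  | nil => exact List.isChain_nil
  | single a => exact List.isChain_singleton a
  | pair a b e => exact List.isChain_pair.2 e
  | cons a m b l e ho h ih => exact List.isChain_cons_cons.2 ⟨e, ih⟩

lemma AW.prefix : ∀ (l₁ : List V) {l₂ : List V}, AW E Z (l₁ ++ l₂) → AW E Z l₁
  | [], _, _ => .nil
  | [a], _, _ => .single a
  | a :: b :: l, l₂, h => by
    obtain ⟨e, ht, ho⟩ := AW.dest (by simpa using h)
    cases l with
    | nil => exact .pair a b e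
    | cons c l' =>
      exact .cons a b c l' e (ho c (l' ++ l₂) (by simp))
        (AW.prefix (b :: c :: l') (by simpa using ht))

lemma AW.suffix : ∀ (l₁ : List V) {l₂ : List V}, AW E Z (l₁ ++ l₂) → AW E Z l₂
  | [], _, h => h
  | a :: l, l₂, h => by
    cases l with
    | nil =>
      cases l₂ with
      | nil => exact .nil
      | cons b l' => exact AW.tail (by simpa using h)
    | cons b l' => exact AW.suffix (b :: l') (AW.tail (by simpa using h))

lemma AW_glue : ∀ (l₁ : List V) {m : V} {l₂ : List V},
    AW E Z (l₁ ++ [m]) → AW E Z (m :: l₂) →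
    (∀ a b, l₁.getLast? = some a → l₂.head? = some b → okT E Z a m b) →
    AW E Z (l₁ ++ m :: l₂)
  | [], m, l₂, _, h₂, _ => h₂
  | [a], m, l₂, h₁, h₂, hok => by
    obtain ⟨e, _, _⟩ := AW.dest (show AW E Z (a :: m :: []) by simpa using h₁)
    cases l₂ with
    | nil => exact .pair a m e
    | cons b l' => exact .cons a m b l' e (hok a b rfl rfl) h₂
  | a :: c :: l₁, m, l₂, h₁, h₂, hok => by
    obtain ⟨e, ht, ho⟩ := AW.dest (show AW E Z (a :: c :: (l₁ ++ [m])) by simpa using h₁)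
    have ih : AW E Z ((c :: l₁) ++ m :: l₂) :=
      AW_glue (c :: l₁) (by simpa using ht) h₂ (by
        intro a' b' ha' hb'
        refine hok a' b' ?_ hb'
        cases l₁ with
        | nil => simp_all
        | cons d l' => rw [List.getLast?_cons_cons] at ha' ⊢; exact ha')
    cases l₁ with
    | nil =>
      exact (show AW E Z (a :: c :: m :: l₂) from
        .cons a c m l₂ e (ho m [] rfl) (by simpa using ih))
    | cons d l' =>
      exact (show AW E Z (a :: c :: d :: (l' ++ m :: l₂)) from
        .cons a c d _ e (ho d (l' ++ [m]) rfl) (by simpa using ih))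

lemma AW.reverse {p : List V} (h : AW E Z p) : AW E Z p.reverse := by
  induction h with
  | nil => exact .nil
  | single a => exact .single a
  | pair a b e => exact .pair b a e.symm
  | cons a m b l e ho h ih =>
    have key : AW E Z ((b :: l).reverse ++ m :: [a]) := by
      refine AW_glue _ ?_ (.pair m a e.symm) ?_
      · simpa [List.reverse_cons] using ih
      · intro a' b' ha' hb'
        rw [List.getLast?_reverse] at ha'
        simp only [List.head?_cons, Option.some_inj] at ha' hb'
        subst ha' hb'
        exact okT_symm ho
    simpa [List.reverse_cons, List.append_assoc] using key


section Bridge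

lemma AW_triple : ∀ (i : ℕ) (p : List V) (a m b : V), AW E Z p →
    p[i]? = some a → p[i+1]? = some m → p[i+2]? = some b → okT E Z a m b
  | 0, [], a, m, b, _, h0, _, _ => by simp at h0
  | 0, [_], a, m, b, _, _, h1, _ => by simp at h1
  | 0, [_, _], a, m, b, _, _, _, h2 => by simp at h2
  | 0, a' :: m' :: b' :: l, a, m, b, h, h0, h1, h2 => by
    simp only [List.getElem?_cons_zero, List.getElem?_cons_succ,
      Option.some_inj, show (0:ℕ)+1 = 1 by rfl, show (0:ℕ)+2 = 2 by rfl] at h0 h1 h2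
    subst h0; subst h1; subst h2
    exact h.dest.2.2 _ _ rfl
  | (i+1), [], a, m, b, _, h0, _, _ => by simp at h0
  | (i+1), c :: p', a, m, b, h, h0, h1, h2 =>
    AW_triple i p' a m b h.tail (by simpa using h0) (by simpa using h1)
      (by simpa using h2)

lemma uwalk_edge : ∀ (i : ℕ) (p : List V) (a b : V), IsUWalk E p →
    p[i]? = some a → p[i+1]? = some b → E a b ∨ E b a
  | 0, [], a, b, _, h0, _ => by simp at h0
  | 0, [_], a, b, _, _, h1 => by simp at h1
  | 0, a' :: b' :: l, a, b, h, h0, h1 => by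
    simp only [List.getElem?_cons_zero, List.getElem?_cons_succ,
      Option.some_inj, show (0:ℕ)+1 = 1 by rfl] at h0 h1
    subst h0; subst h1
    exact (List.isChain_cons_cons.1 h).1
  | (i+1), [], a, b, _, h0, _ => by simp at h0
  | (i+1), c :: p', a, b, h, h0, h1 =>
    uwalk_edge i p' a b (List.IsChain.tail h) (by simpa using h0) (by simpa using h1)

variable (hE : ∀ a b : V, E a b → ¬ E b a)
include hE

lemma AW.not_blocked {p : List V} (h : AW E Z p) : ¬ Blocked E Z p := by
  rintro ⟨i, a, m, b, h0, h1, h2, hbad⟩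
  have hok := AW_triple i p _ _ _ h h0 h1 h2
  rcases hok with ⟨⟨ham, hbm⟩, hAnZ⟩ | ⟨hnc, hmZ⟩
  · rcases hbad with ⟨hcfg, _⟩ | ⟨_, hm⟩
    · rcases hcfg with ⟨_, hmb⟩ | ⟨hma, _⟩ | ⟨hma, _⟩
      · exact hE m b hmb hbm
      · exact hE a m ham hma
      · exact hE a m ham hma
    · exact hm hAnZ
  · rcases hbad with ⟨_, hmZ'⟩ | ⟨hcol, _⟩
    · exact hmZ hmZ'
    · exact hnc hcol

omit hE in
lemma AW_of_not_blocked : ∀ (p : List V), IsUWalk E p → ¬ Blocked E Z p → AW E Z p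
  | [], _, _ => .nil
  | [a], _, _ => .single a
  | [a, b], hw, _ => .pair a b (List.isChain_cons_cons.1 hw).1
  | a :: m :: b :: l, hw, hnb => by
    have hw' := List.isChain_cons_cons.1 hw
    have hnb' : ¬ Blocked E Z (m :: b :: l) := by
      rintro ⟨i, a', m', b', h0, h1, h2, hbad⟩
      exact hnb ⟨i+1, a', m', b', by simpa using h0, by simpa using h1,
        by simpa using h2, hbad⟩
    have hok : okT E Z a m b := by
      have e1 : E a m ∨ E m a := hw'.1
      have e2 : E m b ∨ E b m := (List.isChain_cons_cons.1 hw'.2).1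
      by_cases hcol : E a m ∧ E b m
      · by_cases hAn : m ∈ An E Z
        · exact Or.inl ⟨hcol, hAn⟩
        · exact absurd ⟨0, a, m, b, rfl, rfl, by simp, Or.inr ⟨hcol, hAn⟩⟩ hnb
      · refine Or.inr ⟨hcol, fun hmZ => ?_⟩
        refine hnb ⟨0, a, m, b, rfl, rfl, by simp, Or.inl ⟨?_, hmZ⟩⟩
        rcases e1 with e1 | e1 <;> rcases e2 with e2 | e2
        · exact Or.inl ⟨e1, e2⟩
        · exact absurd ⟨e1, e2⟩ hcol
        · exact Or.inr (Or.inr ⟨e1, e2⟩)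
        · exact Or.inr (Or.inl ⟨e1, e2⟩)
    exact .cons a m b l hw'.1 hok (AW_of_not_blocked _ hw'.2 hnb')

end Bridge

section Anc

lemma mem_An_self {W : Set V} {w : V} (h : w ∈ W) : w ∈ An E W :=
  ⟨w, h, Relation.ReflTransGen.refl⟩

lemma An_mono {W W' : Set V} (h : W ⊆ W') : An E W ⊆ An E W' :=
  fun _ ⟨w, hw, hr⟩ => ⟨w, h hw, hr⟩

lemma An_pred {W : Set V} {u v : V} (h : E u v) (hv : v ∈ An E W) : u ∈ An E W :=
  ⟨hv.choose, hv.choose_spec.1, Relation.ReflTransGen.head h hv.choose_spec.2⟩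

lemma An_rtg {W : Set V} {u v : V} (h : Relation.ReflTransGen E u v)
    (hv : v ∈ An E W) : u ∈ An E W :=
  ⟨hv.choose, hv.choose_spec.1, h.trans hv.choose_spec.2⟩

end Anc

section Walks

/-- From the head of an active walk, following a forward edge, one reaches `An Z`
or the end of the walk by a directed path. -/
lemma head_reach : ∀ (l : List V) (a m y : V), AW E Z (a :: m :: l) → E a m →
    (m :: l).getLast? = some y → a ∈ An E Z ∨ Relation.TransGen E a y
  | [], a, m, y, _, ham, hy => by
    simp only [List.getLast?_singleton, Option.some_inj] at hy
    subst hy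
    exact Or.inr (Relation.TransGen.single ham)
  | b :: l, a, m, y, h, ham, hy => by
    obtain ⟨_, ht, ho⟩ := h.dest
    rcases ho b l rfl with ⟨⟨_, hbm⟩, hAn⟩ | ⟨hnc, _⟩
    · exact Or.inl (An_pred ham hAn)
    · have hmb : E m b := by
        rcases ht.dest.1 with e | e
        · exact e
        · exact absurd ⟨ham, e⟩ hnc
      rcases head_reach l m b y ht hmb (by rwa [List.getLast?_cons_cons] at hy) with
        hAn | htg
      · exact Or.inl (An_pred ham hAn)
      · exact Or.inr (Relation.TransGen.head ham htg)

/-- All vertices of an active walk whose endpoints lie in `An W` (with `An Z ⊆ An W`)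
lie in `An W`. -/
lemma all_mem_An {W : Set V} (hZW : An E Z ⊆ An E W) :
    ∀ (p : List V) (x y : V), AW E Z p → p.head? = some x → p.getLast? = some y →
      x ∈ An E W → y ∈ An E W → ∀ v ∈ p, v ∈ An E W
  | [], x, y, _, hx, _, _, _ => by simp at hx
  | [a], x, y, _, hx, _, hxW, _ => by
    simp only [List.head?_cons, Option.some_inj] at hx
    subst hx
    simpa using hxW
  | a :: m :: l, x, y, h, hx, hy, hxW, hyW => by
    simp only [List.head?_cons, Option.some_inj] at hx
    subst hx
    have hmW : m ∈ An E W := by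
      rcases h.dest.1 with e | e
      · -- E a m
        cases l with
        | nil =>
          simp only [List.getLast?_cons_cons, List.getLast?_singleton,
            Option.some_inj] at hy
          subst hy; exact hyW
        | cons b l' =>
          rcases h.dest.2.2 b l' rfl with ⟨⟨_, _⟩, hAn⟩ | ⟨hnc, _⟩
          · exact hZW hAn
          · have hmb : E m b := by
              rcases h.dest.2.1.dest.1 with e' | e'
              · exact e'
              · exact absurd ⟨e, e'⟩ hnc
            rcases head_reach l' m b y h.dest.2.1 hmb
                (by rw [List.getLast?_cons_cons] at hy; exact hy) with hAn | htg
            · exact hZW hAn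
            · exact An_rtg htg.to_reflTransGen hyW
      · exact An_pred e hxW
    intro v hv
    rcases List.mem_cons.1 hv with rfl | hv
    · exact hxW
    · exact all_mem_An hZW (m :: l) m y h.dest.2.1 rfl
        (by rwa [List.getLast?_cons_cons] at hy) hmW hyW v hv

end Walks

section Cut

variable {X Y : Set V}

/-- The cut ("moralized ancestral") graph relation. -/
def CutR (E : V → V → Prop) (X Y Z : Set V) : V → V → Prop :=
  fun u w =>
    u ∈ An E (X ∪ Y ∪ Z) \ Z ∧ w ∈ An E (X ∪ Y ∪ Z) \ Z ∧
    ∃ v ∈ An E (X ∪ Y ∪ Z), (u = v ∨ E u v) ∧ (w = v ∨ E w v)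

variable (hE : ∀ a b : V, E a b → ¬ E b a)
include hE

/-- Turn an active walk with ends avoiding `Z` and all vertices in the ancestral
closure into a chain for the cut relation. -/
lemma toChain : ∀ (p : List V) (a y : V), AW E Z p →
    p.head? = some a → p.getLast? = some y → a ∉ Z → y ∉ Z →
    (∀ v ∈ p, v ∈ An E (X ∪ Y ∪ Z)) → Relation.ReflTransGen (CutR E X Y Z) a y
  | [], a, y, _, ha, _, _, _, _ => by simp at ha
  | [x], a, y, _, ha, hy, _, _, _ => by
    simp only [List.head?_cons, List.getLast?_singleton, Option.some_inj] at ha hy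
    subst ha; subst hy
    exact Relation.ReflTransGen.refl
  | x :: m :: l, a, y, h, ha, hy, haZ, hyZ, hmem => by
    simp only [List.head?_cons, Option.some_inj] at ha
    subst ha
    rw [List.getLast?_cons_cons] at hy
    have hxA : x ∈ An E (X ∪ Y ∪ Z) := hmem x (by simp)
    have hmA : m ∈ An E (X ∪ Y ∪ Z) := hmem m (by simp)
    rcases l with _ | ⟨b, l'⟩
    · -- p = [a, m], m = y
      simp only [List.getLast?_singleton, Option.some_inj] at hy
      subst hy
      refine Relation.ReflTransGen.single ⟨⟨hxA, haZ⟩, ⟨hmA, hyZ⟩, ?_⟩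
      rcases h.dest.1 with e | e
      · exact ⟨m, hmA, Or.inr e, Or.inl rfl⟩
      · exact ⟨x, hxA, Or.inl rfl, Or.inr e⟩
    · rcases h.dest.2.2 b l' rfl with ⟨⟨ham, hbm⟩, hAn⟩ | ⟨hnc, hmZ⟩
      · -- collider at m: step from a to b
        have hbA : b ∈ An E (X ∪ Y ∪ Z) := hmem b (by simp)
        have hbZ : b ∉ Z := by
          rcases l' with _ | ⟨c, l''⟩
          · rw [List.getLast?_cons_cons] at hy
            simp only [List.getLast?_singleton, Option.some_inj] at hy
            subst hy; exact hyZ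
          · rcases h.dest.2.1.dest.2.2 c l'' rfl with ⟨⟨hmb, _⟩, _⟩ | ⟨_, hbZ⟩
            · exact absurd hmb (hE b m hbm)
            · exact hbZ
        have hstep : CutR E X Y Z x b :=
          ⟨⟨hxA, haZ⟩, ⟨hbA, hbZ⟩, m, An_mono (by intro z hz; exact Or.inr hz) hAn,
            Or.inr ham, Or.inr hbm⟩
        refine Relation.ReflTransGen.head hstep
          (toChain (b :: l') b y (h.dest.2.1.tail) rfl ?_ hbZ hyZ ?_)
        · rwa [List.getLast?_cons_cons] at hy
        · intro v hv; exact hmem v (by simp [List.mem_cons] at hv ⊢; tauto)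
      · -- non-collider at m: step from a to m
        have hstep : CutR E X Y Z x m := by
          refine ⟨⟨hxA, haZ⟩, ⟨hmA, hmZ⟩, ?_⟩
          rcases h.dest.1 with e | e
          · exact ⟨m, hmA, Or.inr e, Or.inl rfl⟩
          · exact ⟨x, hxA, Or.inl rfl, Or.inr e⟩
        refine Relation.ReflTransGen.head hstep
          (toChain (m :: b :: l') m y h.dest.2.1 rfl hy hmZ hyZ ?_)
        intro v hv; exact hmem v (by simp [List.mem_cons] at hv ⊢; tauto)

omit hE in
lemma chain_reach {l : List V} {v : V} (h : List.Chain E v l) :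
    ∀ u ∈ v :: l, Relation.ReflTransGen E v u := by
  induction l generalizing v with
  | nil => intro u hu; simp only [List.mem_singleton] at hu; subst hu; exact .refl
  | cons b l' ih =>
    intro u hu
    rcases List.mem_cons.1 hu with rfl | hu
    · exact .refl
    · obtain ⟨hvb, hch⟩ := List.isChain_cons_cons.1 h
      exact Relation.ReflTransGen.head hvb (ih hch u hu)

lemma AW_of_chain : ∀ (l : List V) (v : V), List.Chain E v l →
    (∀ u ∈ v :: l, u ∉ Z) → AW E Z (v :: l)
  | [], v, _, _ => .single v
  | [b], v, h, _ => by
    obtain ⟨hvb, _⟩ := List.isChain_cons_cons.1 h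
    exact .pair v b (Or.inl hvb)
  | b :: c :: l', v, h, hZ => by
    obtain ⟨hvb, hch⟩ := List.isChain_cons_cons.1 h
    have hbc : E b c := (List.isChain_cons_cons.1 hch).1
    refine .cons v b c l' (Or.inl hvb) (Or.inr ⟨?_, hZ b (by simp)⟩) ?_
    · rintro ⟨_, hcb⟩; exact hE b c hbc hcb
    · exact AW_of_chain (c :: l') b hch (fun u hu => hZ u (by simp [List.mem_cons] at hu ⊢; tauto))

end Cut

section Build

variable {X Y : Set V}

/-- End-state of a growing walk: it ends at `x`, and we know the direction of the
last edge. -/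
def EndSt (E : V → V → Prop) (p : List V) (x : V) : Prop :=
  p = [x] ∨ (∃ p' c, p = p' ++ [c, x] ∧ E x c) ∨ (∃ p' c, p = p' ++ [c, x] ∧ E c x)

lemma EndSt.getLast {p : List V} {x : V} (h : EndSt E p x) : p.getLast? = some x := by
  rcases h with rfl | ⟨p', c, rfl, _⟩ | ⟨p', c, rfl, _⟩
  · rfl
  · rw [show p' ++ [c, x] = (p' ++ [c]) ++ [x] by simp]; exact List.getLast?_concat
  · rw [show p' ++ [c, x] = (p' ++ [c]) ++ [x] by simp]; exact List.getLast?_concat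

lemma head?_app {l₁ l₂ : List V} {a : V} (h : l₁.head? = some a) :
    (l₁ ++ l₂).head? = some a := by rw [List.head?_append, h]; rfl

lemma head?_cons_append (l : List V) (x : V) (s : List V) :
    (l ++ x :: s).head? = (l ++ [x]).head? := by
  rw [List.head?_append, List.head?_append]; rfl

lemma AW_snoc {l : List V} {c x w : V} (h : AW E Z (l ++ [c, x])) (hok : okT E Z c x w)
    (he : E x w ∨ E w x) : AW E Z (l ++ [c, x, w]) := by
  have key := AW_glue (l ++ [c]) (m := x) (l₂ := [w])
    (by simpa using h) (.pair x w he) (fun a b ha hb => by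
      rw [List.getLast?_concat] at ha
      simp only [Option.some_inj, List.head?_cons] at ha hb
      subst ha; subst hb; exact hok)
  simpa using key

lemma AW_seg {l : List V} {c x : V} {s : List V} (h : AW E Z (l ++ [c, x]))
    (hs : AW E Z (x :: s)) (hok : ∀ b, s.head? = some b → okT E Z c x b) :
    AW E Z ((l ++ [c]) ++ x :: s) :=
  AW_glue (l ++ [c]) (by simpa using h) hs (fun a b ha hb => by
    rw [List.getLast?_concat] at ha
    simp only [Option.some_inj] at ha
    subst ha; exact hok b hb)

lemma AW_rev_start {x w : V} (l : List V) (h : AW E Z (x :: l))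
    (hok : ∀ b, l.head? = some b → okT E Z b x w) (he : E x w ∨ E w x) :
    AW E Z (l.reverse ++ [x, w]) := by
  have key := AW_glue l.reverse (m := x) (l₂ := [w])
    (by simpa [List.reverse_cons] using h.reverse) (.pair x w he) (fun a b ha hb => by
      rw [List.getLast?_reverse] at ha
      simp only [Option.some_inj, List.head?_cons] at hb
      subst hb; exact hok a ha)
  simpa using key

lemma chain_first {v b : V} {l : List V} (h : List.Chain E v l) (hb : l.head? = some b) :
    E v b := by
  cases l with
  | nil => simp at hb
  | cons b' l' =>
    simp only [List.head?_cons, Option.some_inj] at hb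
    subst hb
    obtain ⟨h', _⟩ := List.isChain_cons_cons.1 h
    exact h'

variable (hE : ∀ a b : V, E a b → ¬ E b a)
include hE

lemma build {x y : V} (hy : y ∈ Y) (h : Relation.ReflTransGen (CutR E X Y Z) x y) :
    ∀ p, AW E Z p → (∃ x' ∈ X, p.head? = some x') → EndSt E p x →
    ∃ q x' y', x' ∈ X ∧ y' ∈ Y ∧ AW E Z q ∧ q.head? = some x' ∧ q.getLast? = some y' := by
  induction h using Relation.ReflTransGen.head_induction_on with
  | refl =>
    rintro p hp ⟨x', hx', hhead⟩ hend
    exact ⟨p, x', y, hx', hy, hp, hhead, hend.getLast⟩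
  | @head x w step tail ih =>
    rintro p hp ⟨x', hx', hh⟩ hend
    obtain ⟨⟨hxA, hxZ⟩, ⟨hwA, hwZ⟩, v, hvA, hxv, hwv⟩ := step
    rcases hxv with rfl | hxv
    · rcases hwv with rfl | hwv
      · -- x = w
        exact ih p hp ⟨x', hx', hh⟩ hend
      · -- incoming extension: E w x
        rcases hend with rfl | ⟨p', c, rfl, hc⟩ | ⟨p', c, rfl, hc⟩
        · exact ih ([x] ++ [w]) (.pair x w (Or.inr hwv)) ⟨x', hx', head?_app hh⟩
            (Or.inr (Or.inl ⟨[], x, by simp, hwv⟩))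
        · -- last edge E x c : chain w → x → c
          have hok : okT E Z c x w := Or.inr ⟨fun ⟨hcx, _⟩ => hE x c hc hcx, hxZ⟩
          refine ih (p' ++ [c, x, w]) (AW_snoc hp hok (Or.inr hwv)) ⟨x', hx', ?_⟩
            (Or.inr (Or.inl ⟨p' ++ [c], x, by simp, hwv⟩))
          rw [show p' ++ [c, x, w] = (p' ++ [c, x]) ++ [w] by simp]
          exact head?_app hh
        · -- last edge E c x : collider at x needed
          by_cases hxAn : x ∈ An E Z
          · have hok : okT E Z c x w := Or.inl ⟨⟨hc, hwv⟩, hxAn⟩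
            refine ih (p' ++ [c, x, w]) (AW_snoc hp hok (Or.inr hwv)) ⟨x', hx', ?_⟩
              (Or.inr (Or.inl ⟨p' ++ [c], x, by simp, hwv⟩))
            rw [show p' ++ [c, x, w] = (p' ++ [c, x]) ++ [w] by simp]
            exact head?_app hh
          · -- escape along a directed path from x
            have hnotZ : ∀ u, Relation.ReflTransGen E x u → u ∉ Z :=
              fun u hu huZ => hxAn ⟨u, huZ, hu⟩
            obtain ⟨t, htW, hxt⟩ := hxA
            have htXY : t ∈ X ∪ Y := by
              rcases htW with hXt | hZt
              · exact hXt
              · exact absurd hZt (hnotZ t hxt)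
            obtain ⟨l, hch, hlast⟩ := List.exists_isChain_cons_of_relationReflTransGen hxt
            have hlast? : (x :: l).getLast? = some t := by
              rw [List.getLast?_eq_getLast (by simp)]
              exact congrArg some hlast
            have hZl : ∀ u ∈ x :: l, u ∉ Z := fun u hu => hnotZ u (chain_reach hch u hu)
            have hAWxl : AW E Z (x :: l) := AW_of_chain hE l x hch hZl
            rcases htXY with htX | htY
            · -- restart from t ∈ X
              have hok : ∀ b, l.head? = some b → okT E Z b x w := fun b hb =>
                Or.inr ⟨fun ⟨hbx, _⟩ => hE x b (chain_first hch hb) hbx, hxZ⟩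
              refine ih (l.reverse ++ [x, w]) (AW_rev_start l hAWxl hok (Or.inr hwv))
                ⟨t, htX, ?_⟩ (Or.inr (Or.inl ⟨l.reverse, x, by simp, hwv⟩))
              rw [show l.reverse ++ [x, w] = (x :: l).reverse ++ [w] by
                simp [List.reverse_cons]]
              rw [List.head?_append, List.head?_reverse, hlast?]; rfl
            · -- finish at t ∈ Y
              have hok : ∀ b, l.head? = some b → okT E Z c x b := fun b hb =>
                Or.inr ⟨fun ⟨_, hbx⟩ => hE x b (chain_first hch hb) hbx, hxZ⟩
              refine ⟨(p' ++ [c]) ++ x :: l, x', t, hx', htY, AW_seg hp hAWxl hok, ?_, ?_⟩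
              · rw [head?_cons_append, show (p' ++ [c]) ++ [x] = p' ++ [c, x] by simp]
                exact hh
              · rw [List.getLast?_append_of_ne_nil _ (by simp)]
                exact hlast?
    · rcases hwv with rfl | hwv
      · -- outgoing extension: E x w
        rcases hend with rfl | ⟨p', c, rfl, hc⟩ | ⟨p', c, rfl, hc⟩
        · exact ih ([x] ++ [w]) (.pair x w (Or.inl hxv)) ⟨x', hx', head?_app hh⟩
            (Or.inr (Or.inr ⟨[], x, by simp, hxv⟩))
        · have hok : okT E Z c x w := Or.inr ⟨fun ⟨hcx, _⟩ => hE x c hc hcx, hxZ⟩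
          refine ih (p' ++ [c, x, w]) (AW_snoc hp hok (Or.inl hxv)) ⟨x', hx', ?_⟩
            (Or.inr (Or.inr ⟨p' ++ [c], x, by simp, hxv⟩))
          rw [show p' ++ [c, x, w] = (p' ++ [c, x]) ++ [w] by simp]
          exact head?_app hh
        · have hok : okT E Z c x w := Or.inr ⟨fun ⟨_, hwx⟩ => hE x w hxv hwx, hxZ⟩
          refine ih (p' ++ [c, x, w]) (AW_snoc hp hok (Or.inl hxv)) ⟨x', hx', ?_⟩
            (Or.inr (Or.inr ⟨p' ++ [c], x, by simp, hxv⟩))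
          rw [show p' ++ [c, x, w] = (p' ++ [c, x]) ++ [w] by simp]
          exact head?_app hh
      · -- E x v and E w v : collider at v
        by_cases hvAn : v ∈ An E Z
        · rcases hend with rfl | ⟨p', c, rfl, hc⟩ | ⟨p', c, rfl, hc⟩
          · refine ih [x, v, w]
              (.cons x v w [] (Or.inl hxv) (Or.inl ⟨⟨hxv, hwv⟩, hvAn⟩)
                (.pair v w (Or.inr hwv)))
              ⟨x', hx', head?_app hh⟩ (Or.inr (Or.inl ⟨[x], v, by simp, hwv⟩))
          · have hok1 : okT E Z c x v := Or.inr ⟨fun ⟨hcx, _⟩ => hE x c hc hcx, hxZ⟩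
            have h1 : AW E Z ((p' ++ [c]) ++ [x, v]) := by
              simpa using AW_snoc hp hok1 (Or.inl hxv)
            have h2 : AW E Z ((p' ++ [c]) ++ [x, v, w]) :=
              AW_snoc h1 (Or.inl ⟨⟨hxv, hwv⟩, hvAn⟩) (Or.inr hwv)
            refine ih ((p' ++ [c]) ++ [x, v, w]) h2 ⟨x', hx', ?_⟩
              (Or.inr (Or.inl ⟨p' ++ [c, x], v, by simp, hwv⟩))
            rw [show (p' ++ [c]) ++ [x, v, w] = (p' ++ [c, x]) ++ [v, w] by simp]
            exact head?_app hh
          · have hok1 : okT E Z c x v := Or.inr ⟨fun ⟨_, hvx⟩ => hE x v hxv hvx, hxZ⟩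
            have h1 : AW E Z ((p' ++ [c]) ++ [x, v]) := by
              simpa using AW_snoc hp hok1 (Or.inl hxv)
            have h2 : AW E Z ((p' ++ [c]) ++ [x, v, w]) :=
              AW_snoc h1 (Or.inl ⟨⟨hxv, hwv⟩, hvAn⟩) (Or.inr hwv)
            refine ih ((p' ++ [c]) ++ [x, v, w]) h2 ⟨x', hx', ?_⟩
              (Or.inr (Or.inl ⟨p' ++ [c, x], v, by simp, hwv⟩))
            rw [show (p' ++ [c]) ++ [x, v, w] = (p' ++ [c, x]) ++ [v, w] by simp]
            exact head?_app hh
        · -- escape along a directed path from v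
          have hnotZ : ∀ u, Relation.ReflTransGen E v u → u ∉ Z :=
            fun u hu huZ => hvAn ⟨u, huZ, hu⟩
          have hvZ : v ∉ Z := hnotZ v .refl
          obtain ⟨t, htW, hvt⟩ := hvA
          have htXY : t ∈ X ∪ Y := by
            rcases htW with hXt | hZt
            · exact hXt
            · exact absurd hZt (hnotZ t hvt)
          obtain ⟨l, hch, hlast⟩ := List.exists_isChain_cons_of_relationReflTransGen hvt
          have hlast? : (v :: l).getLast? = some t := by
            rw [List.getLast?_eq_getLast (by simp)]
            exact congrArg some hlast
          have hZl : ∀ u ∈ v :: l, u ∉ Z := fun u hu => hnotZ u (chain_reach hch u hu)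
          have hAWvl : AW E Z (v :: l) := AW_of_chain hE l v hch hZl
          have hAWxvl : AW E Z (x :: v :: l) := by
            cases l with
            | nil => exact .pair x v (Or.inl hxv)
            | cons b l' =>
              have hvb : E v b := (List.isChain_cons_cons.1 hch).1
              exact .cons x v b l' (Or.inl hxv)
                (Or.inr ⟨fun ⟨_, hbv⟩ => hE v b hvb hbv, hvZ⟩) hAWvl
          rcases htXY with htX | htY
          · -- restart from t ∈ X
            have hok : ∀ b, l.head? = some b → okT E Z b v w := fun b hb =>
              Or.inr ⟨fun ⟨hbv, _⟩ => hE v b (chain_first hch hb) hbv, hvZ⟩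
            refine ih (l.reverse ++ [v, w]) (AW_rev_start l hAWvl hok (Or.inr hwv))
              ⟨t, htX, ?_⟩ (Or.inr (Or.inl ⟨l.reverse, v, by simp, hwv⟩))
            rw [show l.reverse ++ [v, w] = (v :: l).reverse ++ [w] by
              simp [List.reverse_cons]]
            rw [List.head?_append, List.head?_reverse, hlast?]; rfl
          · -- finish at t ∈ Y
            rcases hend with rfl | ⟨p', c, rfl, hc⟩ | ⟨p', c, rfl, hc⟩
            · refine ⟨x :: v :: l, x', t, hx', htY, hAWxvl, ?_, ?_⟩
              · simpa using hh
              · rw [List.getLast?_cons_cons]; exact hlast?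
            · have hok : ∀ b, (v :: l).head? = some b → okT E Z c x b := by
                intro b hb
                simp only [List.head?_cons, Option.some_inj] at hb
                subst hb
                exact Or.inr ⟨fun ⟨hcx, _⟩ => hE x c hc hcx, hxZ⟩
              refine ⟨(p' ++ [c]) ++ x :: v :: l, x', t, hx', htY,
                AW_seg hp hAWxvl hok, ?_, ?_⟩
              · rw [head?_cons_append, show (p' ++ [c]) ++ [x] = p' ++ [c, x] by simp]
                exact hh
              · rw [List.getLast?_append_of_ne_nil _ (by simp), List.getLast?_cons_cons]
                exact hlast?
            · have hok : ∀ b, (v :: l).head? = some b → okT E Z c x b := by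
                intro b hb
                simp only [List.head?_cons, Option.some_inj] at hb
                subst hb
                exact Or.inr ⟨fun ⟨_, hvx⟩ => hE x v hxv hvx, hxZ⟩
              refine ⟨(p' ++ [c]) ++ x :: v :: l, x', t, hx', htY,
                AW_seg hp hAWxvl hok, ?_, ?_⟩
              · rw [head?_cons_append, show (p' ++ [c]) ++ [x] = p' ++ [c, x] by simp]
                exact hh
              · rw [List.getLast?_append_of_ne_nil _ (by simp), List.getLast?_cons_cons]
                exact hlast?

end Build

section Nodup

variable {X Y : Set V}
variable (hacyc : ∀ v : V, ¬ Relation.TransGen E v v)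
include hacyc

lemma nodupify : ∀ (n : ℕ) (p : List V), p.length ≤ n → AW E Z p →
    ∀ x y, p.head? = some x → p.getLast? = some y →
    ∃ q, AW E Z q ∧ q.Nodup ∧ q.head? = some x ∧ q.getLast? = some y := by
  have hE : ∀ a b : V, E a b → ¬ E b a :=
    fun a b hab hba => hacyc a (Relation.TransGen.head hab (Relation.TransGen.single hba))
  intro n
  induction n with
  | zero =>
    intro p hlen hp x y hhx hhy
    interval_cases h : p.length
    · rw [List.length_eq_zero_iff] at h; subst h; simp at hhx
  | succ n ih =>
    intro p hlen hp x y hhx hhy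
    by_cases hnd : p.Nodup
    · exact ⟨p, hp, hnd, hhx, hhy⟩
    rw [List.nodup_iff_getElem?_ne_getElem?] at hnd
    push_neg at hnd
    obtain ⟨i, j, hij, hjlen, heq⟩ := hnd
    have hilen : i < p.length := lt_trans hij hjlen
    obtain ⟨m, hpi⟩ : ∃ m, p[i]? = some m := ⟨p[i]'hilen, List.getElem?_eq_getElem hilen⟩
    have hpj : p[j]? = some m := heq ▸ hpi
    have htakesucc : p.take (i+1) = p.take i ++ [m] := by
      rw [List.take_succ, hpi]; rfl
    have hAWtake : AW E Z (p.take (i+1)) :=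
      AW.prefix _ (l₂ := p.drop (i+1)) (by rw [List.take_append_drop]; exact hp)
    have hAWdropj : AW E Z (p.drop j) :=
      AW.suffix (p.take j) (by rw [List.take_append_drop]; exact hp)
    have hpj_eq : p[j]'hjlen = m := by
      have := List.getElem?_eq_getElem hjlen
      rw [hpj] at this
      exact (Option.some_inj.1 this).symm
    have hAWcons : AW E Z (m :: p.drop (j+1)) := by
      rw [← hpj_eq, ← List.drop_eq_getElem_cons hjlen]
      exact hAWdropj
    obtain ⟨b1, hb1⟩ : ∃ b1, p[i+1]? = some b1 :=
      ⟨p[i+1]'(by omega), List.getElem?_eq_getElem (by omega)⟩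
    -- the junction triple is fine
    have hok : ∀ a b, (p.take i).getLast? = some a → (p.drop (j+1)).head? = some b →
        okT E Z a m b := by
      intro a b ha hb
      have hipos : 0 < i := by
        rcases Nat.eq_zero_or_pos i with h0 | h0
        · subst h0; simp at ha
        · exact h0
      have ha' : p[i-1]? = some a := by
        rw [List.getLast?_eq_getElem?, List.length_take,
          Nat.min_eq_left (le_of_lt hilen), List.getElem?_take] at ha
        simpa [show i - 1 < i by omega] using ha
      have hb' : p[j+1]? = some b := by
        rw [List.head?_eq_getElem?, List.getElem?_drop] at hb
        simpa using hb
      have hj1len : j + 1 < p.length := by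
        by_contra h0
        rw [List.getElem?_eq_none (by omega)] at hb'
        exact nomatch hb'
      have e1 : E a m ∨ E m a :=
        uwalk_edge (i-1) p a m hp.isUWalk ha' (by rw [show i-1+1 = i by omega]; exact hpi)
      have e2 : E m b ∨ E b m := uwalk_edge j p m b hp.isUWalk hpj hb'
      have e_i1 : E m b1 ∨ E b1 m := uwalk_edge i p m b1 hp.isUWalk hpi hb1
      have Ti : okT E Z a m b1 :=
        AW_triple (i-1) p a m b1 hp ha' (by rw [show i-1+1 = i by omega]; exact hpi)
          (by rw [show i-1+2 = i+1 by omega]; exact hb1)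
      by_cases hcol : E a m ∧ E b m
      · refine Or.inl ⟨hcol, ?_⟩
        rcases Ti with ⟨_, hAn⟩ | ⟨hnc, _⟩
        · exact hAn
        · have hmb1 : E m b1 := by
            rcases e_i1 with e | e
            · exact e
            · exact absurd ⟨hcol.1, e⟩ hnc
          -- segment from position i to position j
          set s := (p.drop i).take (j - i + 1) with hs_def
          have hs_len : s.length = j - i + 1 := by
            simp only [hs_def, List.length_take, List.length_drop]
            omega
          have hsk : ∀ k, k ≤ j - i → s[k]? = p[i+k]? := fun k hk => by
            rw [hs_def, List.getElem?_take, if_pos (by omega), List.getElem?_drop]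
          have hAWs : AW E Z s :=
            AW.prefix _ (l₂ := (p.drop i).drop (j-i+1))
              (by rw [List.take_append_drop]
                  exact AW.suffix (p.take i) (by rw [List.take_append_drop]; exact hp))
          have hs0 : s[0]? = some m := by rw [hsk 0 (by omega)]; simpa using hpi
          have hs1 : s[1]? = some b1 := by rw [hsk 1 (by omega)]; exact hb1
          have hslast : s.getLast? = some m := by
            rw [List.getLast?_eq_getElem?, hs_len,
              show j - i + 1 - 1 = j - i by omega, hsk (j-i) (le_refl _),
              show i + (j-i) = j by omega]
            exact hpj
          obtain ⟨u0, s', hs_eq⟩ := List.exists_cons_of_ne_nil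
            (show s ≠ [] by intro h; rw [h] at hs_len; simp at hs_len)
          have hs'ne : s' ≠ [] := by
            intro h
            rw [hs_eq, h] at hs_len
            simp at hs_len
            omega
          obtain ⟨u1, s'', hs_eq2⟩ := List.exists_cons_of_ne_nil hs'ne
          have hu0 : u0 = m := by
            rw [hs_eq] at hs0; simpa using hs0
          have hu1 : u1 = b1 := by
            rw [hs_eq, hs_eq2] at hs1; simpa using hs1
          have hAWseg : AW E Z (m :: b1 :: s'') := by
            rw [← hu0, ← hu1, ← hs_eq2, ← hs_eq]
            exact hAWs
          have hseglast : (b1 :: s'').getLast? = some m := by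
            have h' := hslast
            rw [hs_eq, hs_eq2, List.getLast?_cons_cons, hu1] at h'
            exact h'
          rcases head_reach s'' m b1 m hAWseg hmb1 hseglast with hAn | htg
          · exact hAn
          · exact absurd htg (hacyc m)
      · refine Or.inr ⟨hcol, ?_⟩
        rcases not_and_or.1 hcol with ham | hbm
        · have hma : E m a := e1.resolve_left ham
          rcases Ti with ⟨⟨h1, _⟩, _⟩ | ⟨_, hmZ⟩
          · exact absurd h1 (hE m a hma)
          · exact hmZ
        · have hmb : E m b := e2.resolve_right hbm
          have hjpos : 0 < j := by omega
          obtain ⟨a1, ha1⟩ : ∃ a1, p[j-1]? = some a1 :=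
            ⟨p[j-1]'(by omega), List.getElem?_eq_getElem (by omega)⟩
          have hj1len : j + 1 < p.length := by
            by_contra h0
            rw [List.getElem?_eq_none (by omega)] at hb'
            exact nomatch hb'
          have Tj : okT E Z a1 m b :=
            AW_triple (j-1) p a1 m b hp ha1 (by rw [show j-1+1 = j by omega]; exact hpj)
              (by rw [show j-1+2 = j+1 by omega]; exact hb')
          rcases Tj with ⟨⟨_, h2⟩, _⟩ | ⟨_, hmZ⟩
          · exact absurd h2 (hE m b hmb)
          · exact hmZ
    have hAWq : AW E Z (p.take i ++ m :: p.drop (j+1)) :=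
      AW_glue (p.take i) (by rw [← htakesucc]; exact hAWtake) hAWcons hok
    have hq_eq : p.take i ++ m :: p.drop (j+1) = p.take (i+1) ++ p.drop (j+1) := by
      rw [htakesucc]; simp
    set q := p.take (i+1) ++ p.drop (j+1) with hq_def
    have hqhead : q.head? = some x := by
      rw [hq_def, List.head?_append, List.head?_eq_getElem?, List.getElem?_take,
        if_pos (by omega : 0 < i + 1), ← List.head?_eq_getElem?, hhx]
      rfl
    have hqlast : q.getLast? = some y := by
      by_cases hj1 : j + 1 < p.length
      · have hdropne : p.drop (j+1) ≠ [] := by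
          rw [List.drop_eq_getElem_cons hj1]
          exact List.cons_ne_nil _ _
        rw [hq_def, List.getLast?_append_of_ne_nil _ hdropne]
        have h' := List.getLast?_append_of_ne_nil (p.take (j+1)) hdropne
        rw [List.take_append_drop] at h'
        rw [← h', hhy]
      · have hdropnil : p.drop (j+1) = [] := List.drop_eq_nil_of_le (by omega)
        rw [hq_def, hdropnil, List.append_nil, List.getLast?_eq_getElem?,
          List.length_take, Nat.min_eq_left (by omega : i + 1 ≤ p.length),
          Nat.add_sub_cancel, List.getElem?_take, if_pos (by omega : i < i + 1), heq,
          show j = p.length - 1 by omega, ← List.getLast?_eq_getElem?, hhy]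
    have hqlen : q.length ≤ n := by
      have h1 : q.length = (i+1) + (p.length - (j+1)) := by
        rw [hq_def, List.length_append, List.length_take, List.length_drop,
          Nat.min_eq_left (by omega)]
      omega
    exact ih q hqlen (hq_eq ▸ hAWq) x y hqhead hqlast

end Nodup

end DSepAux

/-- Equivalence of classical and categorical d-separation (Proposition 6.5 of
Fritz–Klingler, specialized to DAGs): `X` and `Y` are d-separated by `Z` iff, after
restricting to the ancestral closure `A := An(X ∪ Y ∪ Z)` and forming the cut graph
(delete the vertices of `Z`; join two surviving vertices `u`, `w` whenever some vertex
`v` of the restriction has both `u` and `w` among `{v} ∪ Pa(v)`), no vertex of `X`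
is connected to a vertex of `Y`. -/
theorem dsep_iff_cut_disconnected {V : Type} [Fintype V] [DecidableEq V]
    (E : V → V → Prop) (hacyc : IsAcyclicDigraph E)
    (X Y Z : Set V)
    (hXY : Disjoint X Y) (hXZ : Disjoint X Z) (hYZ : Disjoint Y Z) :
    DSep E X Y Z ↔
      (∀ x ∈ X, ∀ y ∈ Y,
        ¬ Relation.ReflTransGen
            (fun u w =>
              u ∈ An E (X ∪ Y ∪ Z) \ Z ∧ w ∈ An E (X ∪ Y ∪ Z) \ Z ∧
              ∃ v ∈ An E (X ∪ Y ∪ Z), (u = v ∨ E u v) ∧ (w = v ∨ E w v))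
            x y) := by
  classical
  have hE : ∀ a b : V, E a b → ¬ E b a :=
    fun a b hab hba => hacyc a (Relation.TransGen.head hab (Relation.TransGen.single hba))
  constructor
  · intro hd x hx y hy hR
    have hR' : Relation.ReflTransGen (DSepAux.CutR E X Y Z) x y := hR
    obtain ⟨q, x', y', hx', hy', hq, hqh, hql⟩ :=
      DSepAux.build hE hy hR' [x] (.single x) ⟨x, hx, rfl⟩ (Or.inl rfl)
    obtain ⟨q', hq', hnd, hqh', hql'⟩ :=
      DSepAux.nodupify hacyc q.length q le_rfl hq x' y' hqh hql
    have hb := hd q' hq'.isUWalk hnd ⟨x', hx', hqh'⟩ ⟨y', hy', hql'⟩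
    exact hq'.not_blocked hE hb
  · intro hR p hw hnd hx hy
    obtain ⟨x, hxX, hhx⟩ := hx
    obtain ⟨y, hyY, hhy⟩ := hy
    by_contra hnb
    have hp := DSepAux.AW_of_not_blocked p hw hnb
    have hxA : x ∈ An E (X ∪ Y ∪ Z) := DSepAux.mem_An_self (Or.inl (Or.inl hxX))
    have hyA : y ∈ An E (X ∪ Y ∪ Z) := DSepAux.mem_An_self (Or.inl (Or.inr hyY))
    have hall := DSepAux.all_mem_An (DSepAux.An_mono (fun z hz => Or.inr hz))
      p x y hp hhx hhy hxA hyA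
    exact hR x hxX y hyY
      (DSepAux.toChain hE p x y hp hhx hhy (Set.disjoint_left.1 hXZ hxX)
        (Set.disjoint_left.1 hYZ hyY) hall)
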